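/- With h_i = x_i − μ, the second von Mises derivative of the r-th central moment functional μ_r(F) is μ_{r·12}(x₁,x₂) = −r[(h₁^{r−1} − μ_{r−1})h₂ + (h₂^{r−1} − μ_{r−1})h₁] + r(r−1) h₁ h₂ μ_{r−2}, where the second derivative is computed from the first derivative via the rule (T_{·1})_{·2} = T_{·12} − T_{·2}. -/

import Mathlib

open MeasureTheory Filter Topology

/-- The mean of a measure on `ℝ`. -/
noncomputable def m1 (G : MeasureTheory.Measure ℝ) : ℝ := ∫ x, x ∂G

/-- The `k`-th central moment of a measure on `ℝ` about its own mean. -/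
noncomputable def cm (G : MeasureTheory.Measure ℝ) (k : ℕ) : ℝ :=
  ∫ x, (x - m1 G) ^ k ∂G

/-- The contaminated measure `(1-ε)F + ε δ_y`. -/
noncomputable def mix (F : MeasureTheory.Measure ℝ) (y : ℝ) (ε : ℝ) :
    MeasureTheory.Measure ℝ :=
  ENNReal.ofReal (1 - ε) • F + ENNReal.ofReal ε • MeasureTheory.Measure.dirac y

/-- The first von Mises derivative (influence function) of `μ_r`, as a functional of `G`:
`μ_{r·1}(G)(x) = (x−μ(G))^r − μ_r(G) − r (x−μ(G)) μ_{r−1}(G)`. -/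
noncomputable def cmIF (r : ℕ) (G : MeasureTheory.Measure ℝ) (x : ℝ) : ℝ :=
  (x - m1 G) ^ r - cm G r - r * (x - m1 G) * cm G (r - 1)

open Finset

lemma integral_mix (F : MeasureTheory.Measure ℝ) {f : ℝ → ℝ} (hf : Integrable f F)
    (y : ℝ) {ε : ℝ} (h0 : 0 ≤ ε) (h1 : ε ≤ 1) :
    ∫ x, f x ∂(mix F y ε) = (1 - ε) * ∫ x, f x ∂F + ε * f y := by
  have hd : Integrable f (MeasureTheory.Measure.dirac y) := by
    have he : f =ᵐ[MeasureTheory.Measure.dirac y] fun _ => f y := by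
      simp [MeasureTheory.ae_dirac_eq, Filter.EventuallyEq]
    exact (integrable_const (f y)).congr he.symm
  unfold mix
  rw [integral_add_measure (hf.smul_measure ENNReal.ofReal_ne_top)
    (hd.smul_measure ENNReal.ofReal_ne_top), integral_smul_measure, integral_smul_measure,
    integral_dirac, ENNReal.toReal_ofReal (by linarith), ENNReal.toReal_ofReal h0,
    smul_eq_mul, smul_eq_mul]

lemma int_sub_pow (F : MeasureTheory.Measure ℝ) (r : ℕ)
    (hint : ∀ k ≤ r, Integrable (fun x : ℝ => x ^ k) F)
    {k : ℕ} (hk : k ≤ r) (c : ℝ) : Integrable (fun x : ℝ => (x - c) ^ k) F := by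
  have hfun : (fun x : ℝ => (x - c) ^ k)
      = fun x => ∑ i ∈ range (k + 1), x ^ i * ((-c) ^ (k - i) * (k.choose i)) := by
    funext x
    rw [sub_eq_add_neg, add_pow]
    exact Finset.sum_congr rfl fun i _ => by ring
  rw [hfun]
  exact integrable_finset_sum _ fun i hi =>
    (hint i (le_trans (Nat.lt_succ_iff.mp (mem_range.mp hi)) hk)).mul_const _

-- expansion of the integral of shifted powers
lemma expand_int (F : MeasureTheory.Measure ℝ) (r : ℕ)
    (hint : ∀ k ≤ r, Integrable (fun x : ℝ => x ^ k) F)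
    {k : ℕ} (hk : k ≤ r) (t : ℝ) :
    ∫ x, (x - (m1 F + t)) ^ k ∂F
      = ∑ i ∈ range (k + 1), cm F i * ((-t) ^ (k - i) * (k.choose i)) := by
  have hfun : ∀ x : ℝ, (x - (m1 F + t)) ^ k
      = ∑ i ∈ range (k + 1), (x - m1 F) ^ i * ((-t) ^ (k - i) * (k.choose i)) := by
    intro x
    have : x - (m1 F + t) = (x - m1 F) + (-t) := by ring
    rw [this, add_pow]
    exact Finset.sum_congr rfl fun i _ => by ring
  simp_rw [hfun]
  rw [integral_finset_sum _ (fun i hi =>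
    (int_sub_pow F r hint (le_trans (Nat.lt_succ_iff.mp (mem_range.mp hi)) hk) (m1 F)).mul_const _)]
  refine Finset.sum_congr rfl fun i _ => ?_
  rw [MeasureTheory.integral_mul_const]
  rfl

/-- value of q at 0 -/
lemma q_zero (c : ℕ → ℝ) (h : ℝ) (k : ℕ) :
    (∑ i ∈ range (k + 1), c i * ((-(0 * h)) ^ (k - i) * (k.choose i))) = c k := by
  rw [Finset.sum_eq_single_of_mem k (Finset.self_mem_range_succ k)]
  · simp
  · intro i hi hne
    have : 1 ≤ k - i := by
      have := Nat.lt_succ_iff.mp (mem_range.mp hi); omega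
    simp [zero_pow (by omega : k - i ≠ 0)]

/-- derivative of q at 0 -/
lemma q_hasDeriv (c : ℕ → ℝ) (h : ℝ) (k : ℕ) :
    HasDerivAt (fun ε : ℝ => ∑ i ∈ range (k + 1), c i * ((-(ε * h)) ^ (k - i) * (k.choose i)))
      (-(k : ℝ) * h * c (k - 1)) 0 := by
  have H : ∀ i ∈ range (k + 1),
      HasDerivAt (fun ε : ℝ => c i * ((-(ε * h)) ^ (k - i) * (k.choose i)))
        (c i * ((((k - i : ℕ) : ℝ) * (-(0 * h)) ^ (k - i - 1) * (-h)) * (k.choose i))) 0 := by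
    intro i _
    have h1 : HasDerivAt (fun ε : ℝ => -(ε * h)) (-h) 0 := (hasDerivAt_mul_const h).neg
    exact ((h1.pow (k - i)).mul_const _).const_mul _
  have hs := HasDerivAt.fun_sum H
  refine (hs.congr_deriv ?_)
  symm
  rcases Nat.eq_zero_or_pos k with hk | hk
  · subst hk; simp
  rw [Finset.sum_eq_single_of_mem (k - 1) (by rw [mem_range]; omega)]
  · have h1 : k - (k - 1) = 1 := by omega
    have h2 : k.choose (k - 1) = k := by
      rw [Nat.choose_symm (show 1 ≤ k by omega), Nat.choose_one_right]
    rw [h1, h2]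
    simp; ring
  · intro i hi hne
    have hik : i ≤ k := Nat.lt_succ_iff.mp (mem_range.mp hi)
    rcases eq_or_lt_of_le hik with rfl | hlt
    · simp
    · have : 1 ≤ k - i - 1 := by omega
      simp [zero_pow (by omega : k - i - 1 ≠ 0)]

/-- the key derivative computation -/
lemma key_hasDeriv (c : ℕ → ℝ) (a h : ℝ) (r : ℕ) (hr : 1 ≤ r) :
    HasDerivAt (fun ε : ℝ =>
        (a - ε * h) ^ r
        - ((1 - ε) * (∑ i ∈ range (r + 1), c i * ((-(ε * h)) ^ (r - i) * (r.choose i)))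
            + ε * ((1 - ε) * h) ^ r)
        - r * ((a - ε * h)
            * ((1 - ε) * (∑ i ∈ range (r - 1 + 1), c i * ((-(ε * h)) ^ (r - 1 - i) * ((r - 1).choose i)))
                + ε * ((1 - ε) * h) ^ (r - 1))))
      ((-(r : ℝ) * ((a ^ (r - 1) - c (r - 1)) * h + (h ^ (r - 1) - c (r - 1)) * a)
          + r * ((r : ℝ) - 1) * a * h * c (r - 2))
        - (h ^ r - c r - r * h * c (r - 1))) 0 := by
  have hlin : HasDerivAt (fun ε : ℝ => a - ε * h) (-h) 0 := (hasDerivAt_mul_const h).const_sub a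
  have hone : HasDerivAt (fun ε : ℝ => 1 - ε) (-1) 0 := (hasDerivAt_id 0).const_sub 1
  have hP : HasDerivAt (fun ε : ℝ => (a - ε * h) ^ r)
      ((r : ℝ) * (a - 0 * h) ^ (r - 1) * (-h)) 0 := hlin.pow r
  have hq1 := q_hasDeriv c h r
  have hq2 := q_hasDeriv c h (r - 1)
  have hc1 : HasDerivAt (fun ε : ℝ =>
      (1 - ε) * (∑ i ∈ range (r + 1), c i * ((-(ε * h)) ^ (r - i) * (r.choose i))))
      ((-1) * (∑ i ∈ range (r + 1), c i * ((-(0 * h)) ^ (r - i) * (r.choose i)))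
        + (1 - 0) * (-(r : ℝ) * h * c (r - 1))) 0 := hone.mul hq1
  have hc2 : HasDerivAt (fun ε : ℝ =>
      (1 - ε) * (∑ i ∈ range (r - 1 + 1), c i * ((-(ε * h)) ^ (r - 1 - i) * ((r - 1).choose i))))
      ((-1) * (∑ i ∈ range (r - 1 + 1), c i * ((-(0 * h)) ^ (r - 1 - i) * ((r - 1).choose i)))
        + (1 - 0) * (-((r - 1 : ℕ) : ℝ) * h * c (r - 1 - 1))) 0 := hone.mul hq2
  have hB1 : HasDerivAt (fun ε : ℝ => ε * ((1 - ε) * h) ^ r)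
      (1 * ((1 - 0) * h) ^ r
        + 0 * ((r : ℝ) * ((1 - 0) * h) ^ (r - 1) * ((-1) * h))) 0 :=
    (hasDerivAt_id 0).mul ((hone.mul_const h).pow r)
  have hB2 : HasDerivAt (fun ε : ℝ => ε * ((1 - ε) * h) ^ (r - 1))
      (1 * ((1 - 0) * h) ^ (r - 1)
        + 0 * (((r - 1 : ℕ) : ℝ) * ((1 - 0) * h) ^ (r - 1 - 1) * ((-1) * h))) 0 :=
    (hasDerivAt_id 0).mul ((hone.mul_const h).pow (r - 1))
  have hG := (hP.sub (hc1.add hB1)).sub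
    (((hlin.mul (hc2.add hB2)).const_mul (r : ℝ)))
  refine (hG.congr_deriv ?_)
  symm
  simp only [Pi.add_apply]
  rw [q_zero, q_zero]
  have e1 : ((r - 1 : ℕ) : ℝ) = (r : ℝ) - 1 := by
    rw [Nat.cast_sub hr]; norm_num
  have e2 : r - 1 - 1 = r - 2 := by omega
  rw [e1, e2]
  simp only [zero_mul, mul_zero, sub_zero, one_mul, mul_one, add_zero, neg_zero]
  ring


/-- The second von Mises derivative of the `r`-th central moment functional is
`μ_{r·12}(x₁,x₂) = −r[(h₁^{r−1} − μ_{r−1})h₂ + (h₂^{r−1} − μ_{r−1})h₁] + r(r−1)h₁h₂μ_{r−2}`,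
where the second derivative is computed from the first via the rule
`(T_{·1})_{·2} = T_{·12} − T_{·2}`: the Gateaux derivative in direction `δ_{x₂}` of
`F ↦ T_F(x₁)` equals `T_{·12}(x₁,x₂) − T_{·2}(x₂)`. -/
theorem second_von_mises_derivative_of_central_moment
    (F : MeasureTheory.Measure ℝ) [IsProbabilityMeasure F]
    (r : ℕ) (hr : 1 ≤ r)
    (hint : ∀ k ≤ r, Integrable (fun x : ℝ => x ^ k) F) (x₁ x₂ : ℝ) :
    Tendsto (fun ε : ℝ => (cmIF r (mix F x₂ ε) x₁ - cmIF r F x₁) / ε)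
      (𝓝[>] 0)
      (𝓝 ((-(r : ℝ) * (((x₁ - m1 F) ^ (r - 1) - cm F (r - 1)) * (x₂ - m1 F)
              + ((x₂ - m1 F) ^ (r - 1) - cm F (r - 1)) * (x₁ - m1 F))
            + r * (r - 1) * (x₁ - m1 F) * (x₂ - m1 F) * cm F (r - 2))
          - cmIF r F x₂)) := by
  have hkey := key_hasDeriv (cm F) (x₁ - m1 F) (x₂ - m1 F) r hr
  set G : ℝ → ℝ := fun ε : ℝ =>
      ((x₁ - m1 F) - ε * (x₂ - m1 F)) ^ r
      - ((1 - ε) * (∑ i ∈ range (r + 1),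
            cm F i * ((-(ε * (x₂ - m1 F))) ^ (r - i) * (r.choose i)))
          + ε * ((1 - ε) * (x₂ - m1 F)) ^ r)
      - r * (((x₁ - m1 F) - ε * (x₂ - m1 F))
          * ((1 - ε) * (∑ i ∈ range (r - 1 + 1),
                cm F i * ((-(ε * (x₂ - m1 F))) ^ (r - 1 - i) * ((r - 1).choose i)))
              + ε * ((1 - ε) * (x₂ - m1 F)) ^ (r - 1))) with hGdef
  have hslope : Tendsto (slope G 0) (𝓝[≠] 0)
      (𝓝 ((-(r : ℝ) * (((x₁ - m1 F) ^ (r - 1) - cm F (r - 1)) * (x₂ - m1 F)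
              + ((x₂ - m1 F) ^ (r - 1) - cm F (r - 1)) * (x₁ - m1 F))
            + r * ((r : ℝ) - 1) * (x₁ - m1 F) * (x₂ - m1 F) * cm F (r - 2))
          - ((x₂ - m1 F) ^ r - cm F r - r * (x₂ - m1 F) * cm F (r - 1)))) :=
    hasDerivAt_iff_tendsto_slope.mp hkey
  have hmono : Tendsto (slope G 0) (𝓝[>] 0) _ :=
    hslope.mono_left (nhdsWithin_mono 0 fun x hx => ne_of_gt hx)
  have hN : ((-(r : ℝ) * (((x₁ - m1 F) ^ (r - 1) - cm F (r - 1)) * (x₂ - m1 F)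
              + ((x₂ - m1 F) ^ (r - 1) - cm F (r - 1)) * (x₁ - m1 F))
            + r * ((r : ℝ) - 1) * (x₁ - m1 F) * (x₂ - m1 F) * cm F (r - 2))
          - ((x₂ - m1 F) ^ r - cm F r - r * (x₂ - m1 F) * cm F (r - 1)))
      = ((-(r : ℝ) * (((x₁ - m1 F) ^ (r - 1) - cm F (r - 1)) * (x₂ - m1 F)
              + ((x₂ - m1 F) ^ (r - 1) - cm F (r - 1)) * (x₁ - m1 F))
            + r * ((r : ℝ) - 1) * (x₁ - m1 F) * (x₂ - m1 F) * cm F (r - 2))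
          - cmIF r F x₂) := by
    unfold cmIF
    rfl
  rw [hN] at hmono
  refine hmono.congr' ?_
  have hG0 : G 0 = cmIF r F x₁ := by
    rw [hGdef]
    simp only []
    rw [q_zero (cm F) (x₂ - m1 F) r, q_zero (cm F) (x₂ - m1 F) (r - 1)]
    unfold cmIF
    ring
  filter_upwards [Ioo_mem_nhdsGT_of_mem (Set.left_mem_Ico.mpr one_pos)] with ε hε
  have hε0 : (0 : ℝ) ≤ ε := hε.1.le
  have hε1 : ε ≤ 1 := hε.2.le
  have hm : m1 (mix F x₂ ε) = m1 F + ε * (x₂ - m1 F) := by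
    have hid : Integrable (fun x : ℝ => x) F := by simpa using hint 1 hr
    have h2 := integral_mix F hid x₂ hε0 hε1
    unfold m1
    unfold m1 at h2
    rw [h2]
    ring
  have hcmk : ∀ k, k ≤ r → cm (mix F x₂ ε) k
      = (1 - ε) * (∑ i ∈ range (k + 1),
          cm F i * ((-(ε * (x₂ - m1 F))) ^ (k - i) * (k.choose i)))
        + ε * ((1 - ε) * (x₂ - m1 F)) ^ k := by
    intro k hk
    have hInt := int_sub_pow F r hint hk (m1 F + ε * (x₂ - m1 F))
    have h2 := integral_mix F hInt x₂ hε0 hε1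
    have hcmdef : cm (mix F x₂ ε) k
        = ∫ x, (x - m1 (mix F x₂ ε)) ^ k ∂(mix F x₂ ε) := rfl
    rw [hcmdef, hm, h2, expand_int F r hint hk (ε * (x₂ - m1 F)),
      show x₂ - (m1 F + ε * (x₂ - m1 F)) = (1 - ε) * (x₂ - m1 F) by ring]
  have hGε : G ε = cmIF r (mix F x₂ ε) x₁ := by
    rw [hGdef]
    unfold cmIF
    rw [hm, hcmk r le_rfl, hcmk (r - 1) (Nat.sub_le r 1)]
    ring
  rw [slope_def_field, hG0, hGε, sub_zero]
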